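/- The tensor product of two separable S-rings is separable: if S-rings 𝒜_1 over G_1 and 𝒜_2 over G_2 are each separable with respect to 𝒦_A, then the S-ring 𝒜_1 ⊗ 𝒜_2 over G_1 × G_2 is separable with respect to 𝒦_A. -/

import Mathlib

open scoped Pointwise

/-- The number of representations of `z` as `x * y` with `x ∈ X`, `y ∈ Y`
(used for the structure constants of an S-ring). -/
def structConst {G : Type*} [Group G] [DecidableEq G] (X Y : Finset G) (z : G) : ℕ :=
  ((X ×ˢ Y).filter (fun q => q.1 * q.2 = z)).card

/-- An S-ring (Schur ring) over a finite group `G`, given by its partition into basic sets: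
the partition contains `{1}`, is closed under inversion, and the products of the
characteristic sums of two blocks are integral linear combinations of characteristic sums,
i.e. the number of representations `z = x * y` (`x ∈ X`, `y ∈ Y`) is constant for `z`
ranging over a block `Z`. -/
structure SRing (G : Type*) [Group G] [Fintype G] [DecidableEq G] where
  basicSets : Finset (Finset G)
  nonempty_mem : ∀ X ∈ basicSets, X.Nonempty
  exists_mem : ∀ g : G, ∃ X ∈ basicSets, g ∈ X
  disj : ∀ X ∈ basicSets, ∀ Y ∈ basicSets, X ≠ Y → Disjoint X Y
  one_mem : ({1} : Finset G) ∈ basicSets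
  inv_mem : ∀ X ∈ basicSets, X.image (fun x => x⁻¹) ∈ basicSets
  structConst_eq : ∀ X ∈ basicSets, ∀ Y ∈ basicSets, ∀ Z ∈ basicSets,
    ∀ z ∈ Z, ∀ z' ∈ Z, structConst X Y z = structConst X Y z'

namespace SRing

variable {G G' : Type*} [Group G] [Fintype G] [DecidableEq G]
  [Group G'] [Fintype G'] [DecidableEq G']

/-- An algebraic isomorphism between S-rings: a bijection between the sets of basic sets
preserving the structure constants. -/
def IsAlgIso (A : SRing G) (B : SRing G') (φ : Finset G → Finset G') : Prop :=
  Set.BijOn φ (A.basicSets : Set (Finset G)) (B.basicSets : Set (Finset G')) ∧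
  ∀ X ∈ A.basicSets, ∀ Y ∈ A.basicSets, ∀ Z ∈ A.basicSets,
    ∀ z ∈ Z, ∀ z' ∈ φ Z, structConst X Y z = structConst (φ X) (φ Y) z'

/-- `φ` is induced by the bijection `f : G → G'` if `R(X)^f = R(X^φ)` for every basic set `X`,
where `R(X) = {(g, xg) : x ∈ X, g ∈ G}`; equivalently (for bijective `f`),
`h * g⁻¹ ∈ X ↔ f h * (f g)⁻¹ ∈ φ X` for all `g h`. -/
def Induces (A : SRing G) (B : SRing G') (φ : Finset G → Finset G') (f : G → G') : Prop :=
  Function.Bijective f ∧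
  ∀ X ∈ A.basicSets, ∀ g h : G, h * g⁻¹ ∈ X ↔ f h * (f g)⁻¹ ∈ φ X

/-- Separability with respect to the class of all finite abelian groups. -/
def SeparableA (A : SRing G) : Prop :=
  ∀ (H : Type) [CommGroup H] [Fintype H] [DecidableEq H],
    ∀ (B : SRing H) (φ : Finset G → Finset H),
      A.IsAlgIso B φ → ∃ f : G → H, A.Induces B φ f

/-- `X` is an `A`-set: a union of basic sets of `A`. -/
def IsASet (A : SRing G) (X : Finset G) : Prop :=
  ∀ Y ∈ A.basicSets, (Y ∩ X).Nonempty → Y ⊆ X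

end SRing


section Helpers

open Finset

variable {G G' : Type*} [Group G] [Fintype G] [DecidableEq G]
  [Group G'] [Fintype G'] [DecidableEq G']

lemma structConst_pos_iff {X Y : Finset G} {z : G} :
    0 < structConst X Y z ↔ ∃ x ∈ X, ∃ y ∈ Y, x * y = z := by
  simp only [structConst, Finset.card_pos, Finset.Nonempty, Finset.mem_filter,
    Finset.mem_product]
  constructor
  · rintro ⟨⟨x, y⟩, ⟨hx, hy⟩, h⟩; exact ⟨x, hx, y, hy, h⟩
  · rintro ⟨x, hx, y, hy, h⟩; exact ⟨(x, y), ⟨hx, hy⟩, h⟩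

lemma structConst_prod {G₁ G₂ : Type*} [Group G₁] [DecidableEq G₁] [Group G₂] [DecidableEq G₂]
    (X₁ Y₁ : Finset G₁) (X₂ Y₂ : Finset G₂) (z₁ : G₁) (z₂ : G₂) :
    structConst (X₁ ×ˢ X₂) (Y₁ ×ˢ Y₂) (z₁, z₂)
      = structConst X₁ Y₁ z₁ * structConst X₂ Y₂ z₂ := by
  unfold structConst
  rw [← Finset.card_product]
  refine Finset.card_bij' (fun q _ => ((q.1.1, q.2.1), (q.1.2, q.2.2)))
    (fun q _ => ((q.1.1, q.2.1), (q.1.2, q.2.2))) ?_ ?_ ?_ ?_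
  · rintro ⟨⟨a, b⟩, ⟨c, d⟩⟩ hq
    simp only [Finset.mem_filter, Finset.mem_product, Prod.mk_mul_mk, Prod.mk.injEq] at hq ⊢
    tauto
  · rintro ⟨⟨a, c⟩, ⟨b, d⟩⟩ hq
    simp only [Finset.mem_filter, Finset.mem_product, Prod.mk_mul_mk, Prod.mk.injEq] at hq ⊢
    tauto
  · rintro ⟨⟨a, b⟩, ⟨c, d⟩⟩ _; rfl
  · rintro ⟨⟨a, c⟩, ⟨b, d⟩⟩ _; rfl

lemma structConst_one_right (X : Finset G) (z : G) :
    structConst X {1} z = if z ∈ X then 1 else 0 := by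
  unfold structConst
  split_ifs with h
  · rw [Finset.card_eq_one]
    refine ⟨(z, 1), ?_⟩
    ext ⟨a, b⟩
    simp only [Finset.mem_filter, Finset.mem_product, Finset.mem_singleton, Prod.mk.injEq]
    constructor
    · rintro ⟨⟨ha, rfl⟩, h2⟩; simp only [mul_one] at h2; exact ⟨h2, rfl⟩
    · rintro ⟨rfl, rfl⟩; simpa using h
  · rw [Finset.card_eq_zero]
    ext ⟨a, b⟩
    simp only [Finset.mem_filter, Finset.mem_product, Finset.mem_singleton,
      Finset.notMem_empty, iff_false, not_and]
    rintro ⟨ha, rfl⟩ h2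
    rw [mul_one] at h2; exact h (h2 ▸ ha)

lemma structConst_one_left (Y : Finset G) (z : G) :
    structConst {1} Y z = if z ∈ Y then 1 else 0 := by
  unfold structConst
  split_ifs with h
  · rw [Finset.card_eq_one]
    refine ⟨(1, z), ?_⟩
    ext ⟨a, b⟩
    simp only [Finset.mem_filter, Finset.mem_product, Finset.mem_singleton, Prod.mk.injEq]
    constructor
    · rintro ⟨⟨rfl, hb⟩, h2⟩; simp only [one_mul] at h2; exact ⟨rfl, h2⟩
    · rintro ⟨rfl, rfl⟩; simpa using h
  · rw [Finset.card_eq_zero]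
    ext ⟨a, b⟩
    simp only [Finset.mem_filter, Finset.mem_product, Finset.mem_singleton,
      Finset.notMem_empty, iff_false, not_and]
    rintro ⟨rfl, hb⟩ h2
    rw [one_mul] at h2; exact h (h2 ▸ hb)

lemma structConst_eq_card_filter (X Y : Finset G) (z : G) :
    structConst X Y z = (X.filter (fun x => x⁻¹ * z ∈ Y)).card := by
  unfold structConst
  apply Finset.card_bij' (i := fun q _ => q.1) (j := fun x _ => (x, x⁻¹ * z))
  · rintro ⟨a, b⟩ hq
    simp only [Finset.mem_filter, Finset.mem_product] at hq ⊢
    refine ⟨hq.1.1, ?_⟩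
    rw [← hq.2]; simpa using hq.1.2
  · intro x hx
    simp only [Finset.mem_filter, Finset.mem_product] at hx ⊢
    exact ⟨⟨hx.1, hx.2⟩, by group⟩
  · rintro ⟨a, b⟩ hq
    simp only [Finset.mem_filter, Finset.mem_product] at hq
    simp only [Prod.mk.injEq, true_and]
    rw [← hq.2]; group
  · intro x hx; rfl

lemma structConst_single {a b z : G} :
    structConst ({a} : Finset G) ({b} : Finset G) z = if a * b = z then 1 else 0 := by
  unfold structConst
  rw [Finset.singleton_product_singleton]
  rw [Finset.filter_singleton]
  rcases eq_or_ne (a * b) z with h | h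
  · simp [h]
  · simp [h]
lemma mem_image_inv' {K : Type*} [Group K] [DecidableEq K] {S : Finset K} {a : K} :
    a ∈ S.image (fun x => x⁻¹) ↔ a⁻¹ ∈ S := by
  simp only [Finset.mem_image]
  constructor
  · rintro ⟨b, hb, rfl⟩; simpa
  · intro h; exact ⟨a⁻¹, h, inv_inv a⟩

lemma prod_image_inv {G₁ G₂ : Type*} [Group G₁] [DecidableEq G₁] [Group G₂] [DecidableEq G₂]
    (X : Finset G₁) (Y : Finset G₂) :
    (X ×ˢ Y).image (fun x => x⁻¹)
      = (X.image (fun x => x⁻¹)) ×ˢ (Y.image (fun y => y⁻¹)) := by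
  ext a
  rw [mem_image_inv', Finset.mem_product, Finset.mem_product, mem_image_inv', mem_image_inv']
  exact Iff.rfl

lemma prod_singleton_inj {G₁ G₂ : Type*} [DecidableEq G₁] [DecidableEq G₂]
    {X X' : Finset G₁} {c : G₂} (h : X ×ˢ ({c} : Finset G₂) = X' ×ˢ {c}) : X = X' := by
  ext x
  have := fun (S : Finset G₁) => Finset.mem_product (p := (x, c)) (s := S) (t := ({c} : Finset G₂))
  constructor
  · intro hx
    have h1 : (x, c) ∈ X' ×ˢ ({c} : Finset G₂) := h ▸ (this X).2 ⟨hx, Finset.mem_singleton_self c⟩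
    exact ((this X').1 h1).1
  · intro hx
    have h1 : (x, c) ∈ X ×ˢ ({c} : Finset G₂) := h ▸ (this X').2 ⟨hx, Finset.mem_singleton_self c⟩
    exact ((this X).1 h1).1

lemma singleton_prod_inj {G₁ G₂ : Type*} [DecidableEq G₁] [DecidableEq G₂]
    {Y Y' : Finset G₂} {c : G₁} (h : ({c} : Finset G₁) ×ˢ Y = {c} ×ˢ Y') : Y = Y' := by
  ext y
  have := fun (S : Finset G₂) => Finset.mem_product (p := (c, y)) (s := ({c} : Finset G₁)) (t := S)
  constructor
  · intro hy
    have h1 : (c, y) ∈ ({c} : Finset G₁) ×ˢ Y' := h ▸ (this Y).2 ⟨Finset.mem_singleton_self c, hy⟩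
    exact ((this Y').1 h1).2
  · intro hy
    have h1 : (c, y) ∈ ({c} : Finset G₁) ×ˢ Y := h ▸ (this Y').2 ⟨Finset.mem_singleton_self c, hy⟩
    exact ((this Y).1 h1).2

lemma structConst_subgroup {H : Type*} [Group H] [DecidableEq H] (K : Subgroup H)
    (U V : Finset ↥K) (z : ↥K) :
    structConst U V z
      = structConst (U.map (Function.Embedding.subtype _))
          (V.map (Function.Embedding.subtype _)) (↑z : H) := by
  unfold structConst
  refine Finset.card_bij (fun q _ => ((↑q.1 : H), (↑q.2 : H))) ?_ ?_ ?_
  · rintro ⟨a, b⟩ hq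
    simp only [Finset.mem_filter, Finset.mem_product, Finset.mem_map,
      Function.Embedding.coe_subtype] at hq ⊢
    obtain ⟨⟨ha, hb⟩, hab⟩ := hq
    exact ⟨⟨⟨a, ha, rfl⟩, ⟨b, hb, rfl⟩⟩, by rw [← Subgroup.coe_mul, hab]⟩
  · rintro ⟨a, b⟩ _ ⟨c, d⟩ _ h
    simp only [Prod.mk.injEq] at h
    exact Prod.ext (Subtype.ext h.1) (Subtype.ext h.2)
  · rintro ⟨x, y⟩ hxy
    simp only [Finset.mem_filter, Finset.mem_product, Finset.mem_map,
      Function.Embedding.coe_subtype] at hxy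
    obtain ⟨⟨⟨a, ha, rfl⟩, ⟨b, hb, rfl⟩⟩, hab⟩ := hxy
    refine ⟨(a, b), ?_, rfl⟩
    simp only [Finset.mem_filter, Finset.mem_product]
    exact ⟨⟨ha, hb⟩, Subtype.ext (by rw [Subgroup.coe_mul]; exact hab)⟩

namespace SRing

variable {A : SRing G}

lemma mem_unique {X Y : Finset G} (hX : X ∈ A.basicSets) (hY : Y ∈ A.basicSets)
    {g : G} (hgX : g ∈ X) (hgY : g ∈ Y) : X = Y := by
  by_contra h
  exact Finset.disjoint_left.1 (A.disj X hX Y hY h) hgX hgY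

noncomputable def blockOf (A : SRing G) (g : G) : Finset G :=
  (A.exists_mem g).choose

lemma blockOf_mem (A : SRing G) (g : G) : A.blockOf g ∈ A.basicSets :=
  (A.exists_mem g).choose_spec.1

lemma mem_blockOf (A : SRing G) (g : G) : g ∈ A.blockOf g :=
  (A.exists_mem g).choose_spec.2

lemma blockOf_eq {X : Finset G} (hX : X ∈ A.basicSets) {g : G} (hg : g ∈ X) :
    A.blockOf g = X :=
  mem_unique (A.blockOf_mem g) hX (A.mem_blockOf g) hg

lemma sum_structConst (A : SRing G) (X : Finset G) (z : G) :
    ∑ Y ∈ A.basicSets, structConst X Y z = X.card := by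
  have h1 : X.card = ∑ Y ∈ A.basicSets,
      (X.filter (fun x => A.blockOf (x⁻¹ * z) = Y)).card :=
    Finset.card_eq_sum_card_fiberwise (fun x _ => A.blockOf_mem _)
  rw [h1]
  apply Finset.sum_congr rfl
  intro Y hY
  rw [structConst_eq_card_filter]
  congr 1
  apply Finset.filter_congr
  intro x _
  constructor
  · intro h; simp only [blockOf_eq hY h]
  · intro h; simpa only [← h] using A.mem_blockOf (x⁻¹ * z)

lemma card_eq_sum_card (A : SRing G) :
    Fintype.card G = ∑ X ∈ A.basicSets, X.card := by
  classical
  have huniv : (Finset.univ : Finset G) = A.basicSets.biUnion (fun X => X) := by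
    ext g
    simp only [Finset.mem_univ, Finset.mem_biUnion, true_iff]
    exact A.exists_mem g
  rw [← Finset.card_univ, huniv,
    Finset.card_biUnion (fun X hX Y hY h => A.disj X hX Y hY h)]

variable {B : SRing G'} {φ : Finset G → Finset G'}

lemma IsAlgIso.phi_mem (hφ : A.IsAlgIso B φ) {X : Finset G} (hX : X ∈ A.basicSets) :
    φ X ∈ B.basicSets := hφ.1.1 hX

lemma IsAlgIso.card_phi (hφ : A.IsAlgIso B φ) {X : Finset G} (hX : X ∈ A.basicSets) :
    (φ X).card = X.card := by
  obtain ⟨Z, hZ, hφZ⟩ := hφ.1.2.2 (B.blockOf_mem (1 : G'))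
  obtain ⟨z, hz⟩ := A.nonempty_mem Z hZ
  have h1 : (1 : G') ∈ φ Z := by rw [hφZ]; exact B.mem_blockOf 1
  calc (φ X).card = ∑ Y' ∈ B.basicSets, structConst (φ X) Y' 1 :=
        (B.sum_structConst (φ X) 1).symm
    _ = ∑ Y ∈ A.basicSets, structConst (φ X) (φ Y) 1 := by
        refine (Finset.sum_bij (fun Y _ => φ Y) (fun Y hY => hφ.phi_mem hY)
          (fun Y hY Y' hY' h => hφ.1.2.1 hY hY' h) ?_ (fun _ _ => rfl)).symm
        intro Y' hY'
        obtain ⟨Y, hY, rfl⟩ := hφ.1.2.2 hY'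
        exact ⟨Y, hY, rfl⟩
    _ = ∑ Y ∈ A.basicSets, structConst X Y z := by
        refine Finset.sum_congr rfl (fun Y hY => ?_)
        exact (hφ.2 X hX Y hY Z hZ z hz 1 h1).symm
    _ = X.card := A.sum_structConst X z

lemma IsAlgIso.phi_one (hφ : A.IsAlgIso B φ) : φ ({1} : Finset G) = {1} := by
  have h1 : (φ ({1} : Finset G)).card = 1 := by
    rw [hφ.card_phi A.one_mem, Finset.card_singleton]
  obtain ⟨b, hb⟩ := Finset.card_eq_one.1 h1
  have hbmem : b ∈ φ ({1} : Finset G) := by rw [hb]; exact Finset.mem_singleton_self b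
  have := hφ.2 {1} A.one_mem {1} A.one_mem {1} A.one_mem 1 (Finset.mem_singleton_self 1)
    b hbmem
  rw [hb, structConst_single, structConst_single] at this
  simp only [one_mul, if_pos rfl] at this
  have hbb : b * b = b := by
    by_contra h
    rw [if_neg h] at this
    exact one_ne_zero this
  rw [hb, mul_eq_right.mp hbb]

lemma IsAlgIso.phi_inv (hφ : A.IsAlgIso B φ) {X : Finset G} (hX : X ∈ A.basicSets) :
    φ (X.image (fun x => x⁻¹)) = (φ X).image (fun x => x⁻¹) := by
  obtain ⟨x, hx⟩ := A.nonempty_mem X hX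
  have hXi : X.image (fun x => x⁻¹) ∈ A.basicSets := A.inv_mem X hX
  have hpos : 0 < structConst X (X.image (fun x => x⁻¹)) 1 :=
    structConst_pos_iff.2 ⟨x, hx, x⁻¹, Finset.mem_image_of_mem _ hx, mul_inv_cancel x⟩
  have h1' : (1 : G') ∈ φ ({1} : Finset G) := by
    rw [hφ.phi_one]; exact Finset.mem_singleton_self 1
  have htr := hφ.2 X hX (X.image (fun x => x⁻¹)) hXi {1} A.one_mem 1
    (Finset.mem_singleton_self 1) 1 h1'
  rw [htr] at hpos
  obtain ⟨u, hu, v, hv, huv⟩ := structConst_pos_iff.1 hpos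
  have hvinv : v = u⁻¹ := eq_inv_of_mul_eq_one_right huv
  have hv' : v ∈ (φ X).image (fun x => x⁻¹) := by
    rw [hvinv]; exact Finset.mem_image_of_mem _ hu
  exact mem_unique (hφ.phi_mem hXi) (B.inv_mem _ (hφ.phi_mem hX)) hv hv'

end SRing

end Helpers

section Factor

lemma factor_left {G₁ G₂ H : Type} [Group G₁] [Fintype G₁] [DecidableEq G₁]
    [Group G₂] [Fintype G₂] [DecidableEq G₂]
    [CommGroup H] [Fintype H] [DecidableEq H]
    (A₁ : SRing G₁) (A₂ : SRing G₂) (T : SRing (G₁ × G₂))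
    (hT : T.basicSets = (A₁.basicSets ×ˢ A₂.basicSets).image (fun q => q.1 ×ˢ q.2))
    (B : SRing H) (φ : Finset (G₁ × G₂) → Finset H) (hφ : T.IsAlgIso B φ)
    (hsep : A₁.SeparableA) :
    ∃ f : G₁ → H, Function.Injective f ∧
      (∀ g : G₁, ∃ X ∈ A₁.basicSets, f g ∈ φ (X ×ˢ ({1} : Finset G₂))) ∧
      (∀ g h : G₁, ∃ X ∈ A₁.basicSets, f h * (f g)⁻¹ ∈ φ (X ×ˢ ({1} : Finset G₂))) ∧
      (∀ X ∈ A₁.basicSets, ∀ g h : G₁,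
        h * g⁻¹ ∈ X ↔ f h * (f g)⁻¹ ∈ φ (X ×ˢ ({1} : Finset G₂))) := by
  classical
  have hbasic : ∀ X ∈ A₁.basicSets, X ×ˢ ({1} : Finset G₂) ∈ T.basicSets := by
    intro X hX
    rw [hT]
    exact Finset.mem_image.2 ⟨(X, {1}), Finset.mem_product.2 ⟨hX, A₂.one_mem⟩, rfl⟩
  have hone : φ (({1} : Finset G₁) ×ˢ ({1} : Finset G₂)) = {1} := by
    have h11 : ({1} : Finset G₁) ×ˢ ({1} : Finset G₂) = ({1} : Finset (G₁ × G₂)) := by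
      rw [Finset.singleton_product_singleton]; rfl
    rw [h11, hφ.phi_one]
  set P : H → Prop := fun h => ∃ X ∈ A₁.basicSets, h ∈ φ (X ×ˢ ({1} : Finset G₂)) with hPdef
  have Pone : P 1 := ⟨{1}, A₁.one_mem, by rw [hone]; exact Finset.mem_singleton_self 1⟩
  have Pmul : ∀ {u v : H}, P u → P v → P (u * v) := by
    rintro u v ⟨X, hX, hu⟩ ⟨X', hX', hv⟩
    obtain ⟨W, hW, hφW⟩ := hφ.1.2.2 (B.blockOf_mem (u * v))
    have huvW : u * v ∈ φ W := by rw [hφW]; exact B.mem_blockOf _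
    have hW' := hW
    rw [hT] at hW'
    obtain ⟨⟨X₁, X₂⟩, hq, rfl⟩ := Finset.mem_image.1 hW'
    obtain ⟨hX₁, hX₂⟩ := Finset.mem_product.1 hq
    have h1X₂ : X₂ = ({1} : Finset G₂) := by
      have hsub2 : ∀ y ∈ X₂, y = 1 := by
        intro y hy
        obtain ⟨x, hx⟩ := A₁.nonempty_mem X₁ hX₁
        have hzmem : (x, y) ∈ X₁ ×ˢ X₂ := Finset.mem_product.2 ⟨hx, hy⟩
        have htr := hφ.2 (X ×ˢ {1}) (hbasic X hX) (X' ×ˢ {1}) (hbasic X' hX')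
          (X₁ ×ˢ X₂) hW (x, y) hzmem (u * v) huvW
        have hpos : 0 < structConst (φ (X ×ˢ ({1} : Finset G₂)))
            (φ (X' ×ˢ ({1} : Finset G₂))) (u * v) :=
          structConst_pos_iff.2 ⟨u, hu, v, hv, rfl⟩
        rw [← htr, structConst_prod] at hpos
        by_contra hne
        rw [structConst_single, if_neg (by simpa using (Ne.symm hne)), mul_zero] at hpos
        exact lt_irrefl 0 hpos
      obtain ⟨y0, hy0⟩ := A₂.nonempty_mem X₂ hX₂
      have h1mem : (1 : G₂) ∈ X₂ := (hsub2 y0 hy0) ▸ hy0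
      exact SRing.mem_unique hX₂ A₂.one_mem h1mem (Finset.mem_singleton_self 1)
    rw [h1X₂] at huvW
    exact ⟨X₁, hX₁, huvW⟩
  have Pinv : ∀ {u : H}, P u → P u⁻¹ := by
    rintro u ⟨X, hX, hu⟩
    refine ⟨X.image (fun x => x⁻¹), A₁.inv_mem X hX, ?_⟩
    have himg : (X ×ˢ ({1} : Finset G₂)).image (fun x => x⁻¹)
        = (X.image fun x => x⁻¹) ×ˢ ({1} : Finset G₂) := by
      rw [prod_image_inv]; congr 1; simp
    rw [← himg, hφ.phi_inv (hbasic X hX), mem_image_inv', inv_inv]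
    exact hu
  let H₁ : Subgroup H :=
    { carrier := {h | P h}
      one_mem' := Pone
      mul_mem' := fun ha hb => Pmul ha hb
      inv_mem' := fun ha => Pinv ha }
  haveI : Fintype ↥H₁ := Fintype.ofFinite _
  let Φ : Finset G₁ → Finset ↥H₁ := fun X => (φ (X ×ˢ ({1} : Finset G₂))).subtype (· ∈ H₁)
  have hsubH : ∀ X ∈ A₁.basicSets, ∀ h ∈ φ (X ×ˢ ({1} : Finset G₂)), h ∈ H₁ :=
    fun X hX h hh => ⟨X, hX, hh⟩
  have hΦmem : ∀ (X : Finset G₁) (a : ↥H₁),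
      a ∈ Φ X ↔ (↑a : H) ∈ φ (X ×ˢ ({1} : Finset G₂)) := fun X a => Finset.mem_subtype
  have hΦmap : ∀ X ∈ A₁.basicSets,
      (Φ X).map (Function.Embedding.subtype _) = φ (X ×ˢ ({1} : Finset G₂)) := by
    intro X hX
    rw [Finset.subtype_map]
    exact Finset.filter_true_of_mem (hsubH X hX)
  have hφinjP : ∀ X ∈ A₁.basicSets, ∀ X' ∈ A₁.basicSets,
      φ (X ×ˢ ({1} : Finset G₂)) = φ (X' ×ˢ ({1} : Finset G₂)) → X = X' := by
    intro X hX X' hX' h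
    have := hφ.1.2.1 (Finset.mem_coe.2 (hbasic X hX)) (Finset.mem_coe.2 (hbasic X' hX')) h
    exact prod_singleton_inj this
  have hΦinj : ∀ X ∈ A₁.basicSets, ∀ X' ∈ A₁.basicSets, Φ X = Φ X' → X = X' := by
    intro X hX X' hX' h
    apply hφinjP X hX X' hX'
    rw [← hΦmap X hX, ← hΦmap X' hX', h]
  have hΦne : ∀ X ∈ A₁.basicSets, (Φ X).Nonempty := by
    intro X hX
    have hcard : (φ (X ×ˢ ({1} : Finset G₂))).Nonempty := by
      rw [← Finset.card_pos, hφ.card_phi (hbasic X hX), Finset.card_product,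
        Finset.card_singleton, mul_one]
      exact Finset.card_pos.2 (A₁.nonempty_mem X hX)
    obtain ⟨h0, hh0⟩ := hcard
    exact ⟨⟨h0, hsubH X hX h0 hh0⟩, (hΦmem X _).2 hh0⟩
  have key : ∀ X ∈ A₁.basicSets, ∀ Y ∈ A₁.basicSets, ∀ Z ∈ A₁.basicSets,
      ∀ z ∈ Z, ∀ w : ↥H₁, w ∈ Φ Z → structConst (Φ X) (Φ Y) w = structConst X Y z := by
    intro X hX Y hY Z hZ z hz w hw
    rw [structConst_subgroup H₁ (Φ X) (Φ Y) w, hΦmap X hX, hΦmap Y hY]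
    have htr := hφ.2 (X ×ˢ {1}) (hbasic X hX) (Y ×ˢ {1}) (hbasic Y hY) (Z ×ˢ {1})
      (hbasic Z hZ) (z, 1) (Finset.mem_product.2 ⟨hz, Finset.mem_singleton_self 1⟩)
      ↑w ((hΦmem Z w).1 hw)
    rw [← htr, structConst_prod, structConst_single]
    simp
  let B₁ : SRing ↥H₁ :=
    { basicSets := A₁.basicSets.image Φ
      nonempty_mem := by
        intro S hS
        obtain ⟨X, hX, rfl⟩ := Finset.mem_image.1 hS
        exact hΦne X hX
      exists_mem := by
        intro a
        obtain ⟨X, hX, ha⟩ := a.2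
        exact ⟨Φ X, Finset.mem_image_of_mem Φ hX, (hΦmem X a).2 ha⟩
      disj := by
        intro S hS S' hS' hne
        obtain ⟨X, hX, rfl⟩ := Finset.mem_image.1 hS
        obtain ⟨X', hX', rfl⟩ := Finset.mem_image.1 hS'
        have hXX' : X ≠ X' := fun h => hne (by rw [h])
        have hdisj := B.disj _ (hφ.phi_mem (hbasic X hX)) _ (hφ.phi_mem (hbasic X' hX'))
          (fun h => hXX' (hφinjP X hX X' hX' h))
        rw [Finset.disjoint_left] at hdisj ⊢
        intro a ha ha'
        exact hdisj ((hΦmem X a).1 ha) ((hΦmem X' a).1 ha')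
      one_mem := by
        have hΦ1 : Φ ({1} : Finset G₁) = ({1} : Finset ↥H₁) := by
          ext a
          rw [hΦmem, hone, Finset.mem_singleton, Finset.mem_singleton]
          exact OneMemClass.coe_eq_one
        rw [← hΦ1]
        exact Finset.mem_image_of_mem Φ A₁.one_mem
      inv_mem := by
        intro S hS
        obtain ⟨X, hX, rfl⟩ := Finset.mem_image.1 hS
        have himg : (X ×ˢ ({1} : Finset G₂)).image (fun x => x⁻¹)
            = (X.image fun x => x⁻¹) ×ˢ ({1} : Finset G₂) := by
          rw [prod_image_inv]; congr 1; simp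
        have hkey : (Φ X).image (fun x => x⁻¹) = Φ (X.image (fun x => x⁻¹)) := by
          ext a
          rw [mem_image_inv', hΦmem, hΦmem, ← himg, hφ.phi_inv (hbasic X hX),
            mem_image_inv']
          norm_cast
        rw [hkey]
        exact Finset.mem_image_of_mem Φ (A₁.inv_mem X hX)
      structConst_eq := by
        intro S hS S' hS' W hW w hw w' hw'
        obtain ⟨X, hX, rfl⟩ := Finset.mem_image.1 hS
        obtain ⟨Y, hY, rfl⟩ := Finset.mem_image.1 hS'
        obtain ⟨Z, hZ, rfl⟩ := Finset.mem_image.1 hW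
        obtain ⟨z, hz⟩ := A₁.nonempty_mem Z hZ
        rw [key X hX Y hY Z hZ z hz w hw, key X hX Y hY Z hZ z hz w' hw'] }
  have halg : A₁.IsAlgIso B₁ Φ := by
    constructor
    · refine ⟨?_, ?_, ?_⟩
      · intro X hX
        exact Finset.mem_coe.2 (Finset.mem_image_of_mem Φ (Finset.mem_coe.1 hX))
      · intro X hX X' hX' h
        exact hΦinj X (Finset.mem_coe.1 hX) X' (Finset.mem_coe.1 hX') h
      · intro S hS
        obtain ⟨X, hX, rfl⟩ := Finset.mem_image.1 (Finset.mem_coe.1 hS)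
        exact ⟨X, Finset.mem_coe.2 hX, rfl⟩
    · intro X hX Y hY Z hZ z hz w hw
      exact (key X hX Y hY Z hZ z hz w hw).symm
  obtain ⟨f₁, hf₁bij, hf₁ind⟩ := hsep ↥H₁ B₁ Φ halg
  refine ⟨fun g => ↑(f₁ g), ?_, ?_, ?_, ?_⟩
  · intro a b h
    exact hf₁bij.1 (Subtype.ext h)
  · intro g
    exact (f₁ g).2
  · intro g h
    obtain ⟨X, hX, hmem⟩ := (f₁ h * (f₁ g)⁻¹).2
    refine ⟨X, hX, ?_⟩
    simpa using hmem
  · intro X hX g h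
    rw [hf₁ind X hX g h, hΦmem]
    norm_cast

lemma factor_right {G₁ G₂ H : Type} [Group G₁] [Fintype G₁] [DecidableEq G₁]
    [Group G₂] [Fintype G₂] [DecidableEq G₂]
    [CommGroup H] [Fintype H] [DecidableEq H]
    (A₁ : SRing G₁) (A₂ : SRing G₂) (T : SRing (G₁ × G₂))
    (hT : T.basicSets = (A₁.basicSets ×ˢ A₂.basicSets).image (fun q => q.1 ×ˢ q.2))
    (B : SRing H) (φ : Finset (G₁ × G₂) → Finset H) (hφ : T.IsAlgIso B φ)
    (hsep : A₂.SeparableA) :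
    ∃ f : G₂ → H, Function.Injective f ∧
      (∀ g : G₂, ∃ X ∈ A₂.basicSets, f g ∈ φ (({1} : Finset G₁) ×ˢ X)) ∧
      (∀ g h : G₂, ∃ X ∈ A₂.basicSets, f h * (f g)⁻¹ ∈ φ (({1} : Finset G₁) ×ˢ X)) ∧
      (∀ X ∈ A₂.basicSets, ∀ g h : G₂,
        h * g⁻¹ ∈ X ↔ f h * (f g)⁻¹ ∈ φ (({1} : Finset G₁) ×ˢ X)) := by
  classical
  have hbasic : ∀ X ∈ A₂.basicSets, ({1} : Finset G₁) ×ˢ X ∈ T.basicSets := by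
    intro X hX
    rw [hT]
    exact Finset.mem_image.2 ⟨({1}, X), Finset.mem_product.2 ⟨A₁.one_mem, hX⟩, rfl⟩
  have hone : φ (({1} : Finset G₁) ×ˢ ({1} : Finset G₂)) = {1} := by
    have h11 : ({1} : Finset G₁) ×ˢ ({1} : Finset G₂) = ({1} : Finset (G₁ × G₂)) := by
      rw [Finset.singleton_product_singleton]; rfl
    rw [h11, hφ.phi_one]
  set P : H → Prop := fun h => ∃ X ∈ A₂.basicSets, h ∈ φ (({1} : Finset G₁) ×ˢ X)
    with hPdef
  have Pone : P 1 := ⟨{1}, A₂.one_mem, by rw [hone]; exact Finset.mem_singleton_self 1⟩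
  have Pmul : ∀ {u v : H}, P u → P v → P (u * v) := by
    rintro u v ⟨X, hX, hu⟩ ⟨X', hX', hv⟩
    obtain ⟨W, hW, hφW⟩ := hφ.1.2.2 (B.blockOf_mem (u * v))
    have huvW : u * v ∈ φ W := by rw [hφW]; exact B.mem_blockOf _
    have hW' := hW
    rw [hT] at hW'
    obtain ⟨⟨X₁, X₂⟩, hq, rfl⟩ := Finset.mem_image.1 hW'
    obtain ⟨hX₁, hX₂⟩ := Finset.mem_product.1 hq
    have h1X₁ : X₁ = ({1} : Finset G₁) := by
      have hsub1 : ∀ y ∈ X₁, y = 1 := by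
        intro y hy
        obtain ⟨x, hx⟩ := A₂.nonempty_mem X₂ hX₂
        have hzmem : (y, x) ∈ X₁ ×ˢ X₂ := Finset.mem_product.2 ⟨hy, hx⟩
        have htr := hφ.2 ({1} ×ˢ X) (hbasic X hX) ({1} ×ˢ X') (hbasic X' hX')
          (X₁ ×ˢ X₂) hW (y, x) hzmem (u * v) huvW
        have hpos : 0 < structConst (φ (({1} : Finset G₁) ×ˢ X))
            (φ (({1} : Finset G₁) ×ˢ X')) (u * v) :=
          structConst_pos_iff.2 ⟨u, hu, v, hv, rfl⟩
        rw [← htr, structConst_prod] at hpos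
        by_contra hne
        rw [structConst_single, if_neg (by simpa using (Ne.symm hne)), zero_mul] at hpos
        exact lt_irrefl 0 hpos
      obtain ⟨y0, hy0⟩ := A₁.nonempty_mem X₁ hX₁
      have h1mem : (1 : G₁) ∈ X₁ := (hsub1 y0 hy0) ▸ hy0
      exact SRing.mem_unique hX₁ A₁.one_mem h1mem (Finset.mem_singleton_self 1)
    rw [h1X₁] at huvW
    exact ⟨X₂, hX₂, huvW⟩
  have Pinv : ∀ {u : H}, P u → P u⁻¹ := by
    rintro u ⟨X, hX, hu⟩
    refine ⟨X.image (fun x => x⁻¹), A₂.inv_mem X hX, ?_⟩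
    have himg : (({1} : Finset G₁) ×ˢ X).image (fun x => x⁻¹)
        = ({1} : Finset G₁) ×ˢ (X.image fun x => x⁻¹) := by
      rw [prod_image_inv]; congr 1; simp
    rw [← himg, hφ.phi_inv (hbasic X hX), mem_image_inv', inv_inv]
    exact hu
  let H₂ : Subgroup H :=
    { carrier := {h | P h}
      one_mem' := Pone
      mul_mem' := fun ha hb => Pmul ha hb
      inv_mem' := fun ha => Pinv ha }
  haveI : Fintype ↥H₂ := Fintype.ofFinite _
  let Φ : Finset G₂ → Finset ↥H₂ := fun X => (φ (({1} : Finset G₁) ×ˢ X)).subtype (· ∈ H₂)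
  have hsubH : ∀ X ∈ A₂.basicSets, ∀ h ∈ φ (({1} : Finset G₁) ×ˢ X), h ∈ H₂ :=
    fun X hX h hh => ⟨X, hX, hh⟩
  have hΦmem : ∀ (X : Finset G₂) (a : ↥H₂),
      a ∈ Φ X ↔ (↑a : H) ∈ φ (({1} : Finset G₁) ×ˢ X) := fun X a => Finset.mem_subtype
  have hΦmap : ∀ X ∈ A₂.basicSets,
      (Φ X).map (Function.Embedding.subtype _) = φ (({1} : Finset G₁) ×ˢ X) := by
    intro X hX
    rw [Finset.subtype_map]
    exact Finset.filter_true_of_mem (hsubH X hX)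
  have hφinjP : ∀ X ∈ A₂.basicSets, ∀ X' ∈ A₂.basicSets,
      φ (({1} : Finset G₁) ×ˢ X) = φ (({1} : Finset G₁) ×ˢ X') → X = X' := by
    intro X hX X' hX' h
    have := hφ.1.2.1 (Finset.mem_coe.2 (hbasic X hX)) (Finset.mem_coe.2 (hbasic X' hX')) h
    exact singleton_prod_inj this
  have hΦinj : ∀ X ∈ A₂.basicSets, ∀ X' ∈ A₂.basicSets, Φ X = Φ X' → X = X' := by
    intro X hX X' hX' h
    apply hφinjP X hX X' hX'
    rw [← hΦmap X hX, ← hΦmap X' hX', h]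
  have hΦne : ∀ X ∈ A₂.basicSets, (Φ X).Nonempty := by
    intro X hX
    have hcard : (φ (({1} : Finset G₁) ×ˢ X)).Nonempty := by
      rw [← Finset.card_pos, hφ.card_phi (hbasic X hX), Finset.card_product,
        Finset.card_singleton, one_mul]
      exact Finset.card_pos.2 (A₂.nonempty_mem X hX)
    obtain ⟨h0, hh0⟩ := hcard
    exact ⟨⟨h0, hsubH X hX h0 hh0⟩, (hΦmem X _).2 hh0⟩
  have key : ∀ X ∈ A₂.basicSets, ∀ Y ∈ A₂.basicSets, ∀ Z ∈ A₂.basicSets,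
      ∀ z ∈ Z, ∀ w : ↥H₂, w ∈ Φ Z → structConst (Φ X) (Φ Y) w = structConst X Y z := by
    intro X hX Y hY Z hZ z hz w hw
    rw [structConst_subgroup H₂ (Φ X) (Φ Y) w, hΦmap X hX, hΦmap Y hY]
    have htr := hφ.2 ({1} ×ˢ X) (hbasic X hX) ({1} ×ˢ Y) (hbasic Y hY) ({1} ×ˢ Z)
      (hbasic Z hZ) (1, z) (Finset.mem_product.2 ⟨Finset.mem_singleton_self 1, hz⟩)
      ↑w ((hΦmem Z w).1 hw)
    rw [← htr, structConst_prod, structConst_single]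
    simp
  let B₂ : SRing ↥H₂ :=
    { basicSets := A₂.basicSets.image Φ
      nonempty_mem := by
        intro S hS
        obtain ⟨X, hX, rfl⟩ := Finset.mem_image.1 hS
        exact hΦne X hX
      exists_mem := by
        intro a
        obtain ⟨X, hX, ha⟩ := a.2
        exact ⟨Φ X, Finset.mem_image_of_mem Φ hX, (hΦmem X a).2 ha⟩
      disj := by
        intro S hS S' hS' hne
        obtain ⟨X, hX, rfl⟩ := Finset.mem_image.1 hS
        obtain ⟨X', hX', rfl⟩ := Finset.mem_image.1 hS'
        have hXX' : X ≠ X' := fun h => hne (by rw [h])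
        have hdisj := B.disj _ (hφ.phi_mem (hbasic X hX)) _ (hφ.phi_mem (hbasic X' hX'))
          (fun h => hXX' (hφinjP X hX X' hX' h))
        rw [Finset.disjoint_left] at hdisj ⊢
        intro a ha ha'
        exact hdisj ((hΦmem X a).1 ha) ((hΦmem X' a).1 ha')
      one_mem := by
        have hΦ1 : Φ ({1} : Finset G₂) = ({1} : Finset ↥H₂) := by
          ext a
          rw [hΦmem, hone, Finset.mem_singleton, Finset.mem_singleton]
          exact OneMemClass.coe_eq_one
        rw [← hΦ1]
        exact Finset.mem_image_of_mem Φ A₂.one_mem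
      inv_mem := by
        intro S hS
        obtain ⟨X, hX, rfl⟩ := Finset.mem_image.1 hS
        have himg : (({1} : Finset G₁) ×ˢ X).image (fun x => x⁻¹)
            = ({1} : Finset G₁) ×ˢ (X.image fun x => x⁻¹) := by
          rw [prod_image_inv]; congr 1; simp
        have hkey : (Φ X).image (fun x => x⁻¹) = Φ (X.image (fun x => x⁻¹)) := by
          ext a
          rw [mem_image_inv', hΦmem, hΦmem, ← himg, hφ.phi_inv (hbasic X hX),
            mem_image_inv']
          norm_cast
        rw [hkey]
        exact Finset.mem_image_of_mem Φ (A₂.inv_mem X hX)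
      structConst_eq := by
        intro S hS S' hS' W hW w hw w' hw'
        obtain ⟨X, hX, rfl⟩ := Finset.mem_image.1 hS
        obtain ⟨Y, hY, rfl⟩ := Finset.mem_image.1 hS'
        obtain ⟨Z, hZ, rfl⟩ := Finset.mem_image.1 hW
        obtain ⟨z, hz⟩ := A₂.nonempty_mem Z hZ
        rw [key X hX Y hY Z hZ z hz w hw, key X hX Y hY Z hZ z hz w' hw'] }
  have halg : A₂.IsAlgIso B₂ Φ := by
    constructor
    · refine ⟨?_, ?_, ?_⟩
      · intro X hX
        exact Finset.mem_coe.2 (Finset.mem_image_of_mem Φ (Finset.mem_coe.1 hX))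
      · intro X hX X' hX' h
        exact hΦinj X (Finset.mem_coe.1 hX) X' (Finset.mem_coe.1 hX') h
      · intro S hS
        obtain ⟨X, hX, rfl⟩ := Finset.mem_image.1 (Finset.mem_coe.1 hS)
        exact ⟨X, Finset.mem_coe.2 hX, rfl⟩
    · intro X hX Y hY Z hZ z hz w hw
      exact (key X hX Y hY Z hZ z hz w hw).symm
  obtain ⟨f₂, hf₂bij, hf₂ind⟩ := hsep ↥H₂ B₂ Φ halg
  refine ⟨fun g => ↑(f₂ g), ?_, ?_, ?_, ?_⟩
  · intro a b h
    exact hf₂bij.1 (Subtype.ext h)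
  · intro g
    exact (f₂ g).2
  · intro g h
    obtain ⟨X, hX, hmem⟩ := (f₂ h * (f₂ g)⁻¹).2
    refine ⟨X, hX, ?_⟩
    simpa using hmem
  · intro X hX g h
    rw [hf₂ind X hX g h, hΦmem]
    norm_cast


end Factor

/-- The tensor product of two S-rings that are separable with respect to the class of all
finite abelian groups is again separable with respect to that class. -/
theorem stmt10 (G₁ G₂ : Type) [Group G₁] [Fintype G₁] [DecidableEq G₁]
    [Group G₂] [Fintype G₂] [DecidableEq G₂]
    (A₁ : SRing G₁) (A₂ : SRing G₂)
    (h₁ : A₁.SeparableA) (h₂ : A₂.SeparableA)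
    (T : SRing (G₁ × G₂))
    (hT : T.basicSets =
      (A₁.basicSets ×ˢ A₂.basicSets).image (fun q => q.1 ×ˢ q.2)) :
    T.SeparableA := by
  classical
  intro H _ _ _ B φ hφ
  obtain ⟨f₁, hf₁inj, hf₁S, hf₁diff, hf₁ind⟩ :=
    factor_left A₁ A₂ T hT B φ hφ h₁
  obtain ⟨f₂, hf₂inj, hf₂S, hf₂diff, hf₂ind⟩ :=
    factor_right A₁ A₂ T hT B φ hφ h₂
  have hbasicL : ∀ X ∈ A₁.basicSets, X ×ˢ ({1} : Finset G₂) ∈ T.basicSets := by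
    intro X hX
    rw [hT]
    exact Finset.mem_image.2 ⟨(X, {1}), Finset.mem_product.2 ⟨hX, A₂.one_mem⟩, rfl⟩
  have hbasicR : ∀ Y ∈ A₂.basicSets, ({1} : Finset G₁) ×ˢ Y ∈ T.basicSets := by
    intro Y hY
    rw [hT]
    exact Finset.mem_image.2 ⟨({1}, Y), Finset.mem_product.2 ⟨A₁.one_mem, hY⟩, rfl⟩
  have hbasicP : ∀ X ∈ A₁.basicSets, ∀ Y ∈ A₂.basicSets, X ×ˢ Y ∈ T.basicSets := by
    intro X hX Y hY
    rw [hT]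
    exact Finset.mem_image.2 ⟨(X, Y), Finset.mem_product.2 ⟨hX, hY⟩, rfl⟩
  have hφinjL : ∀ X ∈ A₁.basicSets, ∀ X' ∈ A₁.basicSets,
      φ (X ×ˢ ({1} : Finset G₂)) = φ (X' ×ˢ ({1} : Finset G₂)) → X = X' := by
    intro X hX X' hX' h
    exact prod_singleton_inj (hφ.1.2.1 (Finset.mem_coe.2 (hbasicL X hX))
      (Finset.mem_coe.2 (hbasicL X' hX')) h)
  have hφinjR : ∀ Y ∈ A₂.basicSets, ∀ Y' ∈ A₂.basicSets,
      φ (({1} : Finset G₁) ×ˢ Y) = φ (({1} : Finset G₁) ×ˢ Y') → Y = Y' := by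
    intro Y hY Y' hY' h
    exact singleton_prod_inj (hφ.1.2.1 (Finset.mem_coe.2 (hbasicR Y hY))
      (Finset.mem_coe.2 (hbasicR Y' hY')) h)
  set S₁ : Finset H := A₁.basicSets.biUnion (fun X => φ (X ×ˢ ({1} : Finset G₂)))
    with hS₁def
  set S₂ : Finset H := A₂.basicSets.biUnion (fun Y => φ (({1} : Finset G₁) ×ˢ Y))
    with hS₂def
  have hmemS₁ : ∀ {u : H}, (∃ X ∈ A₁.basicSets, u ∈ φ (X ×ˢ ({1} : Finset G₂)))
      → u ∈ S₁ := by
    rintro u ⟨X, hX, hu⟩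
    exact Finset.mem_biUnion.2 ⟨X, hX, hu⟩
  have hmemS₂ : ∀ {v : H}, (∃ Y ∈ A₂.basicSets, v ∈ φ (({1} : Finset G₁) ×ˢ Y))
      → v ∈ S₂ := by
    rintro v ⟨Y, hY, hv⟩
    exact Finset.mem_biUnion.2 ⟨Y, hY, hv⟩
  -- cardinality of H
  have hcardH : Fintype.card H = Fintype.card G₁ * Fintype.card G₂ := by
    have hre : ∑ Z ∈ B.basicSets, Z.card = ∑ W ∈ T.basicSets, (φ W).card := by
      refine (Finset.sum_bij (fun W _ => φ W) (fun W hW => hφ.phi_mem hW)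
        (fun W hW W' hW' h => hφ.1.2.1 (Finset.mem_coe.2 hW) (Finset.mem_coe.2 hW') h)
        ?_ (fun _ _ => rfl)).symm
      intro Z hZ
      obtain ⟨W, hW, rfl⟩ := hφ.1.2.2 (Finset.mem_coe.2 hZ)
      exact ⟨W, Finset.mem_coe.1 hW, rfl⟩
    calc Fintype.card H = ∑ Z ∈ B.basicSets, Z.card := B.card_eq_sum_card
      _ = ∑ W ∈ T.basicSets, (φ W).card := hre
      _ = ∑ W ∈ T.basicSets, W.card :=
          Finset.sum_congr rfl (fun W hW => hφ.card_phi hW)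
      _ = Fintype.card (G₁ × G₂) := (T.card_eq_sum_card).symm
      _ = Fintype.card G₁ * Fintype.card G₂ := Fintype.card_prod G₁ G₂
  have hS₁card : S₁.card = Fintype.card G₁ := by
    rw [hS₁def, Finset.card_biUnion]
    · rw [A₁.card_eq_sum_card]
      refine Finset.sum_congr rfl (fun X hX => ?_)
      rw [hφ.card_phi (hbasicL X hX), Finset.card_product, Finset.card_singleton, mul_one]
    · intro X hX X' hX' hne
      exact B.disj _ (hφ.phi_mem (hbasicL X hX)) _ (hφ.phi_mem (hbasicL X' hX'))
        (fun h => hne (hφinjL X hX X' hX' h))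
  have hS₂card : S₂.card = Fintype.card G₂ := by
    rw [hS₂def, Finset.card_biUnion]
    · rw [A₂.card_eq_sum_card]
      refine Finset.sum_congr rfl (fun Y hY => ?_)
      rw [hφ.card_phi (hbasicR Y hY), Finset.card_product, Finset.card_singleton, one_mul]
    · intro Y hY Y' hY' hne
      exact B.disj _ (hφ.phi_mem (hbasicR Y hY)) _ (hφ.phi_mem (hbasicR Y' hY'))
        (fun h => hne (hφinjR Y hY Y' hY' h))
  -- every element of φ (X ×ˢ Y) decomposes uniquely
  have hdec : ∀ X ∈ A₁.basicSets, ∀ Y ∈ A₂.basicSets, ∀ w ∈ φ (X ×ˢ Y),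
      structConst (φ (X ×ˢ ({1} : Finset G₂))) (φ (({1} : Finset G₁) ×ˢ Y)) w = 1 := by
    intro X hX Y hY w hw
    obtain ⟨x, hx⟩ := A₁.nonempty_mem X hX
    obtain ⟨y, hy⟩ := A₂.nonempty_mem Y hY
    have htr := hφ.2 (X ×ˢ {1}) (hbasicL X hX) ({1} ×ˢ Y) (hbasicR Y hY)
      (X ×ˢ Y) (hbasicP X hX Y hY) (x, y) (Finset.mem_product.2 ⟨hx, hy⟩) w hw
    rw [← htr, structConst_prod, structConst_one_right, structConst_one_left,
      if_pos hx, if_pos hy]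
  have hsurj : ∀ w : H, ∃ u ∈ S₁, ∃ v ∈ S₂, u * v = w := by
    intro w
    have hw := B.mem_blockOf w
    obtain ⟨W, hW, hφW⟩ := hφ.1.2.2 (B.blockOf_mem w)
    rw [← hφW] at hw
    have hW' := hW
    rw [hT] at hW'
    obtain ⟨⟨X, Y⟩, hq, rfl⟩ := Finset.mem_image.1 hW'
    obtain ⟨hX, hY⟩ := Finset.mem_product.1 hq
    have := hdec X hX Y hY w hw
    have hpos : 0 < structConst (φ (X ×ˢ ({1} : Finset G₂)))
        (φ (({1} : Finset G₁) ×ˢ Y)) w := by rw [this]; exact Nat.one_pos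
    obtain ⟨u, hu, v, hv, huv⟩ := structConst_pos_iff.1 hpos
    exact ⟨u, hmemS₁ ⟨X, hX, hu⟩, v, hmemS₂ ⟨Y, hY, hv⟩, huv⟩
  have hmulimg : (S₁ ×ˢ S₂).image (fun q => q.1 * q.2) = (Finset.univ : Finset H) := by
    apply Finset.eq_univ_iff_forall.2
    intro w
    obtain ⟨u, hu, v, hv, huv⟩ := hsurj w
    exact Finset.mem_image.2 ⟨(u, v), Finset.mem_product.2 ⟨hu, hv⟩, huv⟩
  have hmulinj : Set.InjOn (fun q : H × H => q.1 * q.2) ↑(S₁ ×ˢ S₂) := by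
    apply Finset.injOn_of_card_image_eq
    rw [hmulimg, Finset.card_univ, hcardH, Finset.card_product, hS₁card, hS₂card]
  have huniq : ∀ {u u' v v' : H}, u ∈ S₁ → u' ∈ S₁ → v ∈ S₂ → v' ∈ S₂ →
      u * v = u' * v' → u = u' ∧ v = v' := by
    intro u u' v v' hu hu' hv hv' h
    have h' : (fun q : H × H => q.1 * q.2) (u, v) = (fun q : H × H => q.1 * q.2) (u', v') := h
    have := hmulinj (Finset.mem_coe.2 (Finset.mem_product.2 ⟨hu, hv⟩))
      (Finset.mem_coe.2 (Finset.mem_product.2 ⟨hu', hv'⟩)) h'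
    exact ⟨congrArg Prod.fst this, congrArg Prod.snd this⟩
  -- key membership equivalence
  have hkey : ∀ X ∈ A₁.basicSets, ∀ Y ∈ A₂.basicSets, ∀ u ∈ S₁, ∀ v ∈ S₂,
      (u * v ∈ φ (X ×ˢ Y) ↔
        u ∈ φ (X ×ˢ ({1} : Finset G₂)) ∧ v ∈ φ (({1} : Finset G₁) ×ˢ Y)) := by
    intro X hX Y hY u hu v hv
    constructor
    · intro hw
      have := hdec X hX Y hY (u * v) hw
      have hpos : 0 < structConst (φ (X ×ˢ ({1} : Finset G₂)))
          (φ (({1} : Finset G₁) ×ˢ Y)) (u * v) := by rw [this]; exact Nat.one_pos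
      obtain ⟨u', hu', v', hv', huv⟩ := structConst_pos_iff.1 hpos
      obtain ⟨hueq, hveq⟩ := huniq (hmemS₁ ⟨X, hX, hu'⟩) hu (hmemS₂ ⟨Y, hY, hv'⟩) hv huv
      rw [← hueq, ← hveq] at *
      exact ⟨hu', hv'⟩
    · rintro ⟨hu', hv'⟩
      obtain ⟨W, hW, hφW⟩ := hφ.1.2.2 (B.blockOf_mem (u * v))
      have huvW : u * v ∈ φ W := by rw [hφW]; exact B.mem_blockOf _
      have hW' := hW
      rw [hT] at hW'
      obtain ⟨⟨X', Y'⟩, hq, rfl⟩ := Finset.mem_image.1 hW'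
      obtain ⟨hX', hY'⟩ := Finset.mem_product.1 hq
      obtain ⟨x', hx'⟩ := A₁.nonempty_mem X' hX'
      obtain ⟨y', hy'⟩ := A₂.nonempty_mem Y' hY'
      have htr := hφ.2 (X ×ˢ {1}) (hbasicL X hX) ({1} ×ˢ Y) (hbasicR Y hY)
        (X' ×ˢ Y') hW (x', y') (Finset.mem_product.2 ⟨hx', hy'⟩) (u * v) huvW
      have hpos : 0 < structConst (φ (X ×ˢ ({1} : Finset G₂)))
          (φ (({1} : Finset G₁) ×ˢ Y)) (u * v) :=
        structConst_pos_iff.2 ⟨u, hu', v, hv', rfl⟩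
      rw [← htr, structConst_prod, structConst_one_right, structConst_one_left] at hpos
      have hx'X : x' ∈ X := by
        by_contra hc
        rw [if_neg hc, zero_mul] at hpos
        exact lt_irrefl 0 hpos
      have hy'Y : y' ∈ Y := by
        by_contra hc
        rw [if_neg hc, mul_zero] at hpos
        exact lt_irrefl 0 hpos
      have hXeq : X' = X := SRing.mem_unique hX' hX hx' hx'X
      have hYeq : Y' = Y := SRing.mem_unique hY' hY hy' hy'Y
      rw [hXeq, hYeq] at huvW
      exact huvW
  -- the induced bijection
  refine ⟨fun p => f₁ p.1 * f₂ p.2, ?_, ?_⟩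
  · rw [Fintype.bijective_iff_injective_and_card]
    constructor
    · rintro ⟨a₁, a₂⟩ ⟨b₁, b₂⟩ hab
      obtain ⟨h1, h2⟩ := huniq (hmemS₁ (hf₁S a₁)) (hmemS₁ (hf₁S b₁))
        (hmemS₂ (hf₂S a₂)) (hmemS₂ (hf₂S b₂)) hab
      exact Prod.ext (hf₁inj h1) (hf₂inj h2)
    · rw [Fintype.card_prod, hcardH]
  · intro W hW g h
    have hW' := hW
    rw [hT] at hW'
    obtain ⟨⟨X, Y⟩, hq, rfl⟩ := Finset.mem_image.1 hW'
    obtain ⟨hX, hY⟩ := Finset.mem_product.1 hq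
    obtain ⟨g₁, g₂⟩ := g
    obtain ⟨h₁', h₂'⟩ := h
    have hprod : (h₁', h₂') * (g₁, g₂)⁻¹ = (h₁' * g₁⁻¹, h₂' * g₂⁻¹) := rfl
    have hmul : f₁ h₁' * f₂ h₂' * (f₁ g₁ * f₂ g₂)⁻¹
        = (f₁ h₁' * (f₁ g₁)⁻¹) * (f₂ h₂' * (f₂ g₂)⁻¹) := by
      rw [mul_inv, mul_mul_mul_comm]
    rw [hprod, Finset.mem_product, hmul]
    rw [hf₁ind X hX g₁ h₁', hf₂ind Y hY g₂ h₂']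
    exact (hkey X hX Y hY _ (hmemS₁ (hf₁diff g₁ h₁')) _ (hmemS₂ (hf₂diff g₂ h₂'))).symm
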